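/- Let B be a real p×p matrix such that P B Pᵀ is strictly lower triangular for some permutation matrix P (so I − B is invertible), let D be a diagonal p×p matrix with strictly positive diagonal entries, set Σ = (I − B)⁻¹ D (I − B)⁻ᵀ, and let L be a lower triangular matrix with strictly positive diagonal entries satisfying L Lᵀ = Σ. Fix an index r and a nonzero real δ, and set ξ = L⁻¹ (I − B)⁻¹ (δ • e_r), where e_r is the r-th standard basis vector. Then: (a) ξ ≠ 0; and (b) if ξ has exactly one nonzero coordinate, then that coordinate is the r-th one (i.e., ξ_r ≠ 0 and ξ_j = 0 for all j ≠ r). -/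
import Mathlib

open Matrix

private lemma tri_facts {p : ℕ} (T : Matrix (Fin p) (Fin p) ℝ)
    (htri : ∀ i j : Fin p, i < j → T i j = 0) (hd : ∀ i : Fin p, T i i ≠ 0) :
    IsUnit T.det ∧ (∀ i j : Fin p, i < j → T⁻¹ i j = 0) ∧
      (∀ i : Fin p, T⁻¹ i i * T i i = 1) := by
  have hbt : T.BlockTriangular OrderDual.toDual := fun i j hij => htri i j hij
  have hdet : T.det = ∏ i, T i i := Matrix.det_of_lowerTriangular T hbt
  have hU : IsUnit T.det := by
    rw [hdet]
    exact isUnit_iff_ne_zero.2 (Finset.prod_ne_zero_iff.2 fun i _ => hd i)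
  haveI : Invertible T := T.invertibleOfIsUnitDet hU
  have hbt' : T⁻¹.BlockTriangular OrderDual.toDual :=
    Matrix.blockTriangular_inv_of_blockTriangular hbt
  have htri' : ∀ i j : Fin p, i < j → T⁻¹ i j = 0 := fun i j hij => hbt' hij
  refine ⟨hU, htri', fun i => ?_⟩
  have h1 : (T⁻¹ * T) i i = 1 := by rw [T.nonsing_inv_mul hU, Matrix.one_apply_eq]
  rw [Matrix.mul_apply] at h1
  have h2 : ∑ j : Fin p, T⁻¹ i j * T j i = T⁻¹ i i * T i i :=
    Finset.sum_eq_single_of_mem i (Finset.mem_univ i) (fun k _ hk => by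
      rcases lt_or_gt_of_ne hk with h | h
      · rw [htri k i h, mul_zero]
      · rw [htri' i k h, zero_mul])
  rw [← h2]
  exact h1

theorem root_cause_identifiability
    {p : ℕ} (B D L : Matrix (Fin p) (Fin p) ℝ)
    (σ : Equiv.Perm (Fin p))
    (hB : ∀ i j : Fin p, i ≤ j → B (σ i) (σ j) = 0)
    (hDdiag : ∀ i j : Fin p, i ≠ j → D i j = 0)
    (hDpos : ∀ i : Fin p, 0 < D i i)
    (hLtri : ∀ i j : Fin p, i < j → L i j = 0)
    (hLdiag : ∀ i : Fin p, 0 < L i i)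
    (hLL : L * Lᵀ = (1 - B)⁻¹ * D * ((1 - B)⁻¹)ᵀ)
    (r : Fin p) (δ : ℝ) (hδ : δ ≠ 0)
    (ξ : Fin p → ℝ)
    (hξ : ξ = (L⁻¹ * (1 - B)⁻¹).mulVec (δ • (Pi.single r 1 : Fin p → ℝ))) :
    ξ ≠ 0 ∧
      ((∃! i : Fin p, ξ i ≠ 0) → (ξ r ≠ 0 ∧ ∀ j : Fin p, j ≠ r → ξ j = 0)) := by
  set M : Matrix (Fin p) (Fin p) ℝ := 1 - B with hM
  -- B has zero diagonal
  have hBd : ∀ i : Fin p, B i i = 0 := fun i => by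
    simpa using hB (σ.symm i) (σ.symm i) le_rfl
  have hMd : ∀ i : Fin p, M i i = 1 := fun i => by
    simp [hM, hBd i, Matrix.sub_apply, Matrix.one_apply_eq]
  -- the permuted matrix M' is lower triangular with unit diagonal
  have hM'tri : ∀ i j : Fin p, i < j → (M.submatrix σ σ) i j = 0 := by
    intro i j hij
    have hne : σ i ≠ σ j := fun h => hij.ne (σ.injective h)
    simp [hM, Matrix.submatrix_apply, Matrix.sub_apply, Matrix.one_apply_ne hne,
      hB i j hij.le]
  have hM'd : ∀ i : Fin p, (M.submatrix σ σ) i i ≠ 0 := fun i => by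
    simp [Matrix.submatrix_apply, hMd (σ i)]
  obtain ⟨hM'det, hM'invtri, hM'invdiag⟩ := tri_facts (M.submatrix σ σ) hM'tri hM'd
  have hMdet : IsUnit M.det := by
    rwa [Matrix.det_submatrix_equiv_self] at hM'det
  -- M⁻¹ r r = 1
  have hMinv_rr : M⁻¹ r r = 1 := by
    have h1 := hM'invdiag (σ.symm r)
    rw [Matrix.inv_submatrix_equiv] at h1
    simp only [Matrix.submatrix_apply, Equiv.apply_symm_apply] at h1
    rw [hMd r, mul_one] at h1
    exact h1
  -- L is invertible, L⁻¹ lower triangular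
  obtain ⟨hLdet, hLinvtri, hLinvdiag⟩ := tri_facts L hLtri (fun i => (hLdiag i).ne')
  -- D is diagonal
  have hDeq : D = Matrix.diagonal (fun i => D i i) := by
    ext i j
    by_cases h : i = j
    · subst h; simp
    · simp [Matrix.diagonal_apply_ne _ h, hDdiag i j h]
  have hDinv : D⁻¹ = Matrix.diagonal (fun i => (D i i)⁻¹) := by
    apply Matrix.inv_eq_right_inv
    nth_rewrite 1 [hDeq]
    rw [Matrix.diagonal_mul_diagonal]
    ext i j
    by_cases h : i = j
    · subst h; simp [mul_inv_cancel₀ (hDpos i).ne']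
    · simp [Matrix.diagonal_apply_ne _ h, Matrix.one_apply_ne h]
  -- key identities
  have hL1 : L * (L⁻¹ * M⁻¹) = M⁻¹ := by
    rw [← Matrix.mul_assoc, L.mul_nonsing_inv hLdet, Matrix.one_mul]
  have hKey : (L⁻¹)ᵀ * (L⁻¹ * M⁻¹) = Mᵀ * D⁻¹ := by
    have h1 : (L⁻¹)ᵀ * L⁻¹ = (L * Lᵀ)⁻¹ := by
      rw [Matrix.mul_inv_rev, Matrix.transpose_nonsing_inv]
    rw [← Matrix.mul_assoc, h1, hLL]
    rw [Matrix.mul_inv_rev, Matrix.mul_inv_rev, Matrix.transpose_nonsing_inv,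
      Matrix.nonsing_inv_nonsing_inv _ hMdet,
      Matrix.nonsing_inv_nonsing_inv _ (by rwa [Matrix.det_transpose])]
    rw [Matrix.mul_assoc, Matrix.mul_assoc, M.mul_nonsing_inv hMdet, Matrix.mul_one]
  -- evaluate the two mulVec identities at r
  have hLξ : L.mulVec ξ = fun i => δ * (M⁻¹ i r) := by
    rw [hξ, Matrix.mulVec_mulVec, hL1, Matrix.mulVec_smul, Matrix.mulVec_single]
    ext i
    simp [mul_comm]
  have hL'ξ : (L⁻¹)ᵀ.mulVec ξ = fun i => δ * ((Mᵀ * D⁻¹) i r) := by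
    rw [hξ, Matrix.mulVec_mulVec, hKey, Matrix.mulVec_smul, Matrix.mulVec_single]
    ext i
    simp [mul_comm]
  have hMDrr : (Mᵀ * D⁻¹) r r = (D r r)⁻¹ := by
    rw [hDinv, Matrix.mul_diagonal, Matrix.transpose_apply, hMd r, one_mul]
  have hDrr : (D r r)⁻¹ ≠ 0 := inv_ne_zero (hDpos r).ne'
  constructor
  · intro h0
    have h1 := congrFun hLξ r
    rw [h0, Matrix.mulVec_zero] at h1
    rw [hMinv_rr, mul_one] at h1
    exact hδ h1.symm
  · rintro ⟨i, hi, huniq⟩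
    have hξk : ∀ k : Fin p, k ≠ i → ξ k = 0 := by
      intro k hk
      by_contra h
      exact hk (huniq k h)
    have hir : i = r := by
      rcases lt_trichotomy i r with h | h | h
      · -- i < r : use (L⁻¹)ᵀ identity at r
        have h1 := congrFun hL'ξ r
        rw [hMDrr] at h1
        have h2 : (L⁻¹)ᵀ.mulVec ξ r = 0 := by
          rw [Matrix.mulVec, dotProduct]
          refine Finset.sum_eq_zero fun k _ => ?_
          by_cases hk : k = i
          · subst hk
            rw [Matrix.transpose_apply, hLinvtri k r h, zero_mul]
          · rw [hξk k hk, mul_zero]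
        rw [h2] at h1
        exact absurd h1.symm (mul_ne_zero hδ hDrr)
      · exact h
      · -- r < i : use L identity at r
        have h1 := congrFun hLξ r
        rw [hMinv_rr, mul_one] at h1
        have h2 : L.mulVec ξ r = 0 := by
          rw [Matrix.mulVec, dotProduct]
          refine Finset.sum_eq_zero fun k _ => ?_
          by_cases hk : k = i
          · subst hk
            rw [hLtri r k h, zero_mul]
          · rw [hξk k hk, mul_zero]
        rw [h2] at h1
        exact absurd h1.symm hδ
    subst hir
    exact ⟨hi, fun j hj => hξk j hj⟩
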